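/- For every real-valued Schwartz function f ∈ 𝒮(ℝ), the function p ↦ ‖𝓕f(p)‖²/|p| is integrable on ℝ if and only if ∫_ℝ f(x) dx = 0. (Infrared regularity: the generalized quadratic form q defining the Fock state is finite exactly on the constrained test functions, and diverges for nonzero total charge.) -/

import Mathlib

open MeasureTheory Filter Topology
open scoped FourierTransform

/-- Complexification of a real-valued Schwartz function. -/
noncomputable def schwartzComplexify (f : SchwartzMap ℝ ℝ) : SchwartzMap ℝ ℂ where
  toFun x := (f x : ℂ)
  smooth' := Complex.ofRealCLM.contDiff.comp f.smooth'
  decay' := by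
    intro k n
    obtain ⟨C, hC⟩ := f.decay' k n
    refine ⟨C, fun x => ?_⟩
    have h : ‖iteratedFDeriv ℝ n (fun y : ℝ => (f y : ℂ)) x‖
        = ‖iteratedFDeriv ℝ n f x‖ := by
      have := (RCLike.ofRealLI (K := ℂ)).norm_iteratedFDeriv_comp_left
        (f := (f : ℝ → ℝ)) (f.smooth'.contDiffAt (x := x)) (i := n) (by exact_mod_cast le_top)
      exact this
    rw [h]
    exact hC x

lemma schwartzComplexify_apply (f : SchwartzMap ℝ ℝ) (x : ℝ) :
    schwartzComplexify f x = (f x : ℂ) := rfl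

/-- (Infrared regularity.)  For every real-valued Schwartz function
`f ∈ 𝒮(ℝ)`, the function `p ↦ ‖𝓕f(p)‖²/|p|` is integrable on ℝ iff `∫ f = 0`. -/
theorem stmt_8 (f : SchwartzMap ℝ ℝ) :
    Integrable (fun p : ℝ => ‖𝓕 (fun x : ℝ => (f x : ℂ)) p‖ ^ 2 / |p|) ↔
      (∫ x, f x) = 0 := by
  set g : SchwartzMap ℝ ℂ := SchwartzMap.fourierTransformCLM ℂ (schwartzComplexify f) with hg
  have hgeq : ∀ p, 𝓕 (fun x : ℝ => (f x : ℂ)) p = g p := fun p => rfl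
  have hg0 : g 0 = ((∫ x, f x : ℝ) : ℂ) := by
    have h1 : g 0 = 𝓕 (fun x : ℝ => (f x : ℂ)) 0 := rfl
    rw [h1, Real.fourier_real_eq]
    simp
    exact integral_ofReal
  have hnn : ∀ p : ℝ, 0 ≤ ‖g p‖ ^ 2 / |p| :=
    fun p => div_nonneg (by positivity) (abs_nonneg p)
  constructor
  · -- integrability ⇒ zero integral
    intro hInt
    by_contra hne
    have hgne : g 0 ≠ 0 := by
      rw [hg0]; exact_mod_cast hne
    set c : ℝ := ‖g 0‖ with hc
    have hcpos : 0 < c := norm_pos_iff.mpr hgne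
    have hcne : c ≠ 0 := ne_of_gt hcpos
    obtain ⟨δ, hδpos, hδ⟩ := Metric.continuousAt_iff.mp (g.continuous.continuousAt (x := 0))
      (c / 2) (half_pos hcpos)
    have hlow : ∀ p ∈ Set.Ioo (0:ℝ) δ, c / 2 ≤ ‖g p‖ := by
      intro p hp
      have hd : dist p 0 < δ := by
        rw [Real.dist_eq, sub_zero, abs_of_pos hp.1]; exact hp.2
      have h2 : ‖g p - g 0‖ < c / 2 := by
        have := hδ hd; rwa [dist_eq_norm] at this
      have h1 : ‖g 0‖ - ‖g p‖ ≤ ‖g p - g 0‖ := by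
        have := norm_sub_norm_le (g 0) (g p)
        rwa [norm_sub_rev] at this
      linarith
    have hinv : IntegrableOn (fun p : ℝ => p⁻¹) (Set.Ioo 0 δ) := by
      have hmono : IntegrableOn (fun p : ℝ =>
          (2 / c) ^ 2 * (‖𝓕 (fun x : ℝ => (f x : ℂ)) p‖ ^ 2 / |p|)) (Set.Ioo 0 δ) :=
        (hInt.const_mul _).integrableOn
      refine hmono.mono' (measurable_inv.aestronglyMeasurable.restrict) ?_
      filter_upwards [ae_restrict_mem measurableSet_Ioo] with p hp
      have hp0 : 0 < p := hp.1
      rw [Real.norm_eq_abs, abs_of_pos (inv_pos.mpr hp0), hgeq p]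
      rw [abs_of_pos hp0]
      have key : (2/c)^2 * ((c/2)^2 / p) = p⁻¹ := by field_simp
      calc p⁻¹ = (2/c)^2 * ((c/2)^2 / p) := key.symm
        _ ≤ (2/c)^2 * (‖g p‖^2 / p) := by
            gcongr
            exact hlow p hp
    have hrpow : IntegrableOn (fun p : ℝ => p ^ (-1 : ℝ)) (Set.Ioo 0 δ) := by
      simpa [Real.rpow_neg_one] using hinv
    have := (intervalIntegral.integrableOn_Ioo_rpow_iff hδpos).mp hrpow
    linarith
  · -- zero integral ⇒ integrability
    intro hzero
    have hg0' : g 0 = 0 := by rw [hg0, hzero]; simp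
    obtain ⟨M, hM⟩ := g.decay' 0 0
    have hM' : ∀ p, ‖g p‖ ≤ M := by
      intro p
      have := hM p
      simp [norm_iteratedFDeriv_zero] at this
      exact this
    obtain ⟨C, hC⟩ := (SchwartzMap.fderivCLM ℝ ℝ ℂ g).decay' 0 0
    have hC' : ∀ p : ℝ, ‖fderiv ℝ g p‖ ≤ C := by
      intro p
      have := hC p
      simp [norm_iteratedFDeriv_zero] at this
      exact this
    have hCnn : 0 ≤ C := le_trans (norm_nonneg _) (hC' 0)
    have hlin : ∀ p : ℝ, ‖g p‖ ≤ C * |p| := by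
      intro p
      have := Convex.norm_image_sub_le_of_norm_fderiv_le
        (f := (g : ℝ → ℂ)) (s := Set.univ)
        (fun x _ => g.differentiableAt) (fun x _ => hC' x) convex_univ
        (Set.mem_univ 0) (Set.mem_univ p)
      simpa [hg0', Real.norm_eq_abs] using this
    have hmeas : AEStronglyMeasurable
        (fun p : ℝ => ‖𝓕 (fun x : ℝ => (f x : ℂ)) p‖ ^ 2 / |p|) volume := by
      have hm : Measurable (fun p : ℝ => ‖g p‖ ^ 2 * |p|⁻¹) :=
        ((g.continuous.norm.pow 2).measurable).mul (continuous_abs.measurable.inv)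
      refine hm.aestronglyMeasurable.congr ?_
      filter_upwards with p
      rw [hgeq p, div_eq_mul_inv]
    have hIcc : IntegrableOn
        (fun p : ℝ => ‖𝓕 (fun x : ℝ => (f x : ℂ)) p‖ ^ 2 / |p|) (Set.Icc (-1) 1) := by
      refine Measure.integrableOn_of_bounded (M := C ^ 2)
        (measure_Icc_lt_top).ne hmeas ?_
      filter_upwards [ae_restrict_mem measurableSet_Icc] with p hp
      rw [Real.norm_eq_abs, hgeq p, abs_of_nonneg (hnn p)]
      rcases eq_or_ne p 0 with h0 | h0
      · simp [h0]; positivity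
      · have hpabs : 0 < |p| := abs_pos.mpr h0
        have h4 : |p| ≤ 1 := abs_le.mpr ⟨hp.1, hp.2⟩
        have h3 : (C * |p|) ^ 2 / |p| = C ^ 2 * |p| := by
          field_simp
        calc ‖g p‖ ^ 2 / |p| ≤ (C * |p|) ^ 2 / |p| := by
              gcongr
              exact hlin p
          _ = C ^ 2 * |p| := h3
          _ ≤ C ^ 2 * 1 := by gcongr
          _ = C ^ 2 := mul_one _
    have hcompl : IntegrableOn
        (fun p : ℝ => ‖𝓕 (fun x : ℝ => (f x : ℂ)) p‖ ^ 2 / |p|) (Set.Icc (-1) 1)ᶜ := by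
      have hdom : IntegrableOn (fun p : ℝ => M * ‖g p‖) (Set.Icc (-1) 1)ᶜ :=
        (g.integrable.norm.const_mul M).integrableOn
      refine hdom.mono' hmeas.restrict ?_
      filter_upwards [ae_restrict_mem measurableSet_Icc.compl] with p hp
      have h1 : 1 ≤ |p| := by
        by_contra h
        exact hp (abs_le.mp (le_of_lt (not_le.mp h)))
      rw [Real.norm_eq_abs, hgeq p, abs_of_nonneg (hnn p)]
      calc ‖g p‖ ^ 2 / |p| ≤ ‖g p‖ ^ 2 / 1 := by
            gcongr
          _ = ‖g p‖ * ‖g p‖ := by ring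
          _ ≤ M * ‖g p‖ := mul_le_mul_of_nonneg_right (hM' p) (norm_nonneg _)
    have := hIcc.union hcompl
    rwa [Set.union_compl_self, integrableOn_univ] at this
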